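/- arXiv:0910.5038 — 6 statements merged into one kernel-verified Lean document; each statement's English description precedes it below -/
import Mathlib

section
/- Fix integers m > n ≥ 1 and 1 ≤ i ≤ n. For every nonzero a ∈ ℝ^{m−n}, the matrix w_{L_i}(a) := x_{L_i}(a) · x_{−L_i}((2/|a|²)·a) · x_{L_i}(a) equals the (m+n)×(m+n) matrix M determined by: M_{i,i+n} = −|a|²/2, M_{i+n,i} = −2/|a|², M_{2n+ℓ,2n+k} = δ_{ℓk} − 2·a_ℓ·a_k/|a|² for 1 ≤ ℓ,k ≤ m−n, M_{k,k} = 1 for all 1 ≤ k ≤ 2n with k ∉ {i, i+n}, and all other entries of M equal to 0. -/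
noncomputable section

open Matrix

/-- The `N × N` real matrix with `(k,l)` entry (1-based) equal to `1`
and all other entries `0`. -/
def Estd (N k l : ℕ) : Matrix (Fin N) (Fin N) ℝ :=
  Matrix.of fun p q => if p.val + 1 = k ∧ q.val + 1 = l then 1 else 0

/-- `f^ℓ_{L_i} = E_{i,2n+ℓ} − E_{2n+ℓ,i+n}` (1-based indices). -/
def fL (m n i ℓ : ℕ) : Matrix (Fin (m + n)) (Fin (m + n)) ℝ :=
  Estd (m + n) i (2 * n + ℓ) - Estd (m + n) (2 * n + ℓ) (i + n)

/-- `f^ℓ_{−L_i} = E_{i+n,2n+ℓ} − E_{2n+ℓ,i}` (1-based indices). -/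
def fnegL (m n i ℓ : ℕ) : Matrix (Fin (m + n)) (Fin (m + n)) ℝ :=
  Estd (m + n) (i + n) (2 * n + ℓ) - Estd (m + n) (2 * n + ℓ) i

/-- The squared Euclidean norm `|a|²` of `a ∈ ℝ^{m−n}`. -/
def sqnorm (d : ℕ) (a : Fin d → ℝ) : ℝ := ∑ ℓ, (a ℓ) ^ 2

/-- `x_{L_i}(a) = I + Σ_ℓ a_ℓ f^ℓ_{L_i} − (|a|²/2) E_{i,i+n}`. -/
def xL (m n i : ℕ) (a : Fin (m - n) → ℝ) : Matrix (Fin (m + n)) (Fin (m + n)) ℝ :=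
  1 + (∑ ℓ : Fin (m - n), a ℓ • fL m n i (ℓ.val + 1)) -
    (sqnorm (m - n) a / 2) • Estd (m + n) i (i + n)

/-- `x_{−L_i}(a) = I + Σ_ℓ a_ℓ f^ℓ_{−L_i} − (|a|²/2) E_{i+n,i}`. -/
def xnegL (m n i : ℕ) (a : Fin (m - n) → ℝ) : Matrix (Fin (m + n)) (Fin (m + n)) ℝ :=
  1 + (∑ ℓ : Fin (m - n), a ℓ • fnegL m n i (ℓ.val + 1)) -
    (sqnorm (m - n) a / 2) • Estd (m + n) (i + n) i

/-- `w_{L_i}(a) = x_{L_i}(a) · x_{−L_i}((2/|a|²)·a) · x_{L_i}(a)`. -/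
def wL (m n i : ℕ) (a : Fin (m - n) → ℝ) : Matrix (Fin (m + n)) (Fin (m + n)) ℝ :=
  xL m n i a * xnegL m n i ((2 / sqnorm (m - n) a) • a) * xL m n i a

/-- Extension of `a ∈ ℝ^{m−n}` by zero to a function on `ℕ` (0-based). -/
def ext (d : ℕ) (a : Fin d → ℝ) : ℕ → ℝ :=
  fun k => if h : k < d then a ⟨k, h⟩ else 0

/-! ### Auxiliary machinery -/

/-- standard basis vector, 1-based index `j`. -/
def eV (N j : ℕ) : Fin N → ℝ := fun p => if p.val + 1 = j then 1 else 0

/-- the vector carrying `a` in coordinates `2n, …, 2n+d-1` (0-based). -/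
def uV (m n : ℕ) (a : Fin (m - n) → ℝ) : Fin (m + n) → ℝ :=
  fun p => if 2 * n ≤ p.val then ext (m - n) a (p.val - 2 * n) else 0

lemma ite_and_mul (A B : Prop) [Decidable A] [Decidable B] :
    (if A ∧ B then (1:ℝ) else 0) = (if A then (1:ℝ) else 0) * (if B then 1 else 0) := by
  by_cases hA : A <;> by_cases hB : B <;> simp [hA, hB]

lemma sum_pick (d : ℕ) (a : Fin d → ℝ) (t c : ℕ) (hb : t < c + d) :
    (∑ ℓ : Fin d, a ℓ * (if t + 1 = c + (ℓ.val + 1) then 1 else 0))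
      = if c ≤ t then ext d a (t - c) else 0 := by
  rcases le_or_gt c t with h | h
  · have ht : t - c < d := by omega
    rw [if_pos h, Finset.sum_eq_single (⟨t - c, ht⟩ : Fin d)]
    · rw [if_pos (show t + 1 = c + ((⟨t - c, ht⟩ : Fin d).val + 1) by simp; omega), mul_one]
      show a ⟨t - c, ht⟩ = if h : t - c < d then a ⟨t - c, h⟩ else 0
      rw [dif_pos ht]
    · intro b _ hb2
      rw [if_neg (show ¬(t + 1 = c + (b.val + 1)) from
        fun hc => hb2 (Fin.ext (by simp; omega))), mul_zero]
    · simp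
  · rw [if_neg (show ¬(c ≤ t) by omega)]
    refine Finset.sum_eq_zero fun ℓ _ => ?_
    rw [if_neg (show ¬(t + 1 = c + (ℓ.val + 1)) by omega), mul_zero]

lemma xGen (m n j k : ℕ) (hj : 1 ≤ j) (hj2 : j ≤ 2 * n) (hk : 1 ≤ k) (hk2 : k ≤ 2 * n)
    (hnm : n ≤ m) (a : Fin (m - n) → ℝ) :
    (1 + (∑ ℓ : Fin (m - n), a ℓ •
        (Estd (m + n) j (2 * n + (ℓ.val + 1)) - Estd (m + n) (2 * n + (ℓ.val + 1)) k)) -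
      (sqnorm (m - n) a / 2) • Estd (m + n) j k)
    = 1 + vecMulVec (eV (m + n) j) (uV m n a) - vecMulVec (uV m n a) (eV (m + n) k)
      - (sqnorm (m - n) a / 2) • vecMulVec (eV (m + n) j) (eV (m + n) k) := by
  ext p q
  have hp : p.val < m + n := p.isLt
  have hq : q.val < m + n := q.isLt
  simp only [Matrix.add_apply, Matrix.sub_apply, Matrix.smul_apply, Matrix.sum_apply,
    Estd, vecMulVec_apply, Matrix.of_apply, smul_eq_mul, Matrix.one_apply]
  have h1 : (∑ ℓ : Fin (m - n), a ℓ *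
      ((if p.val + 1 = j ∧ q.val + 1 = 2 * n + (ℓ.val + 1) then (1:ℝ) else 0) -
        (if p.val + 1 = 2 * n + (ℓ.val + 1) ∧ q.val + 1 = k then 1 else 0)))
      = eV (m + n) j p * uV m n a q - uV m n a p * eV (m + n) k q := by
    simp only [mul_sub]
    rw [Finset.sum_sub_distrib]
    have hS1 : (∑ ℓ : Fin (m - n), a ℓ *
        (if p.val + 1 = j ∧ q.val + 1 = 2 * n + (ℓ.val + 1) then (1:ℝ) else 0))
        = eV (m + n) j p * uV m n a q := by
      by_cases hpj : p.val + 1 = j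
      · simp only [hpj, true_and]
        rw [sum_pick (m - n) a q.val (2 * n) (by omega)]
        simp [eV, uV, hpj]
      · rw [Finset.sum_eq_zero (fun ℓ _ => by
          rw [if_neg (fun hc => hpj hc.1), mul_zero])]
        simp [eV, hpj]
    have hS2 : (∑ ℓ : Fin (m - n), a ℓ *
        (if p.val + 1 = 2 * n + (ℓ.val + 1) ∧ q.val + 1 = k then (1:ℝ) else 0))
        = uV m n a p * eV (m + n) k q := by
      by_cases hqk : q.val + 1 = k
      · simp only [hqk, and_true]
        rw [sum_pick (m - n) a p.val (2 * n) (by omega)]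
        simp [eV, uV, hqk]
      · rw [Finset.sum_eq_zero (fun ℓ _ => by
          rw [if_neg (fun hc => hqk hc.2), mul_zero])]
        simp [eV, hqk]
    rw [hS1, hS2]
  rw [h1, ite_and_mul]
  simp only [eV]
  ring

lemma dot_e_e (N j k : ℕ) (hj1 : 1 ≤ j) (hjN : j ≤ N) :
    eV N j ⬝ᵥ eV N k = if j = k then 1 else 0 := by
  unfold dotProduct eV
  rw [Finset.sum_eq_single (⟨j - 1, by omega⟩ : Fin N)]
  · rw [if_pos (show ((⟨j - 1, by omega⟩ : Fin N) : ℕ) + 1 = j by simp; omega), one_mul]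
    have h : (((⟨j - 1, by omega⟩ : Fin N) : ℕ) + 1 = k) ↔ (j = k) := by simp; omega
    simp only [h]
  · intro b _ hb
    rw [if_neg (show ¬((b : ℕ) + 1 = j) from
      fun hc => hb (Fin.ext (by simp; omega))), zero_mul]
  · simp

lemma dot_e_u (m n j : ℕ) (hj : j ≤ 2 * n) (a : Fin (m - n) → ℝ) :
    eV (m + n) j ⬝ᵥ uV m n a = 0 := by
  refine Finset.sum_eq_zero fun p _ => ?_
  unfold eV uV
  by_cases hp : p.val + 1 = j
  · rw [if_neg (show ¬(2 * n ≤ p.val) by omega), mul_zero]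
  · rw [if_neg hp, zero_mul]

lemma dot_u_e (m n j : ℕ) (hj : j ≤ 2 * n) (a : Fin (m - n) → ℝ) :
    uV m n a ⬝ᵥ eV (m + n) j = 0 := by
  refine Finset.sum_eq_zero fun p _ => ?_
  unfold eV uV
  by_cases hp : p.val + 1 = j
  · rw [if_neg (show ¬(2 * n ≤ p.val) by omega), zero_mul]
  · rw [if_neg hp, mul_zero]

lemma dot_u_u (m n : ℕ) (hnm : n ≤ m) (a : Fin (m - n) → ℝ) :
    uV m n a ⬝ᵥ uV m n a = sqnorm (m - n) a := by
  unfold dotProduct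
  have h1 : ∑ p : Fin (m + n), uV m n a p * uV m n a p
      = ∑ t ∈ Finset.range (m + n),
        (fun t => (if 2 * n ≤ t then ext (m - n) a (t - 2 * n) else 0) *
          (if 2 * n ≤ t then ext (m - n) a (t - 2 * n) else 0)) t := by
    rw [← Fin.sum_univ_eq_sum_range]
    rfl
  rw [h1, ← Finset.sum_range_add_sum_Ico _ (show 2 * n ≤ m + n by omega)]
  rw [Finset.sum_eq_zero (fun t ht => by
    rw [if_neg (show ¬(2 * n ≤ t) by simp at ht; omega)]
    ring), zero_add]
  rw [Finset.sum_Ico_eq_sum_range]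
  have h2 : sqnorm (m - n) a = ∑ t ∈ Finset.range (m - n),
      (fun t => ext (m - n) a t * ext (m - n) a t) t := by
    rw [← Fin.sum_univ_eq_sum_range]
    unfold sqnorm
    refine Finset.sum_congr rfl fun ℓ _ => ?_
    show a ℓ ^ 2 = (if h : (ℓ : ℕ) < m - n then a ⟨ℓ, h⟩ else 0) *
      (if h : (ℓ : ℕ) < m - n then a ⟨ℓ, h⟩ else 0)
    rw [dif_pos ℓ.isLt]
    ring
  rw [h2]
  have h3 : m + n - 2 * n = m - n := by omega
  rw [h3]
  refine Finset.sum_congr rfl fun t ht => ?_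
  rw [if_pos (show 2 * n ≤ 2 * n + t by omega)]
  have : 2 * n + t - 2 * n = t := by omega
  rw [this]

lemma vmv_mul {N : ℕ} (v w x y : Fin N → ℝ) :
    vecMulVec v w * vecMulVec x y = (w ⬝ᵥ x) • vecMulVec v y := by
  ext p q
  simp only [Matrix.mul_apply, vecMulVec_apply, Matrix.smul_apply, smul_eq_mul, dotProduct,
    Finset.sum_mul]
  exact Finset.sum_congr rfl fun r _ => by ring

lemma vmv_smul_left {N : ℕ} (c : ℝ) (v w : Fin N → ℝ) :
    vecMulVec (c • v) w = c • vecMulVec v w := by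
  ext p q
  simp [vecMulVec_apply, mul_assoc]

lemma vmv_smul_right {N : ℕ} (c : ℝ) (v w : Fin N → ℝ) :
    vecMulVec v (c • w) = c • vecMulVec v w := by
  ext p q
  simp [vecMulVec_apply]
  ring

lemma ext_smul (d : ℕ) (c : ℝ) (a : Fin d → ℝ) (k : ℕ) :
    ext d (c • a) k = c * ext d a k := by
  show (if h : k < d then (c • a) ⟨k, h⟩ else 0) = c * (if h : k < d then a ⟨k, h⟩ else 0)
  split_ifs <;> simp

lemma uV_smul (m n : ℕ) (c : ℝ) (a : Fin (m - n) → ℝ) :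
    uV m n (c • a) = c • uV m n a := by
  funext p
  simp only [uV, ext_smul, Pi.smul_apply, smul_eq_mul]
  split_ifs <;> ring

lemma sqnorm_smul (d : ℕ) (c : ℝ) (a : Fin d → ℝ) :
    sqnorm d (c • a) = c ^ 2 * sqnorm d a := by
  simp [sqnorm, Finset.mul_sum, mul_pow]

set_option maxHeartbeats 4000000 in
lemma W_eq (m n i : ℕ) (hmn : n < m) (hn : 1 ≤ n) (hi1 : 1 ≤ i) (hin : i ≤ n)
    (a : Fin (m - n) → ℝ) :
    (Matrix.of (fun p q =>
        if p.val + 1 = i ∧ q.val + 1 = i + n then -(sqnorm (m - n) a) / 2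
        else if p.val + 1 = i + n ∧ q.val + 1 = i then -2 / sqnorm (m - n) a
        else if 2 * n + 1 ≤ p.val + 1 ∧ 2 * n + 1 ≤ q.val + 1 then
          (if p = q then 1 else 0) -
            2 * ext (m - n) a (p.val - 2 * n) * ext (m - n) a (q.val - 2 * n) /
              sqnorm (m - n) a
        else if p = q ∧ p.val + 1 ≤ 2 * n ∧ p.val + 1 ≠ i ∧ p.val + 1 ≠ i + n then 1
        else 0) : Matrix (Fin (m + n)) (Fin (m + n)) ℝ)
    = 1 - vecMulVec (eV (m + n) i) (eV (m + n) i)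
      - vecMulVec (eV (m + n) (i + n)) (eV (m + n) (i + n))
      - (sqnorm (m - n) a / 2) • vecMulVec (eV (m + n) i) (eV (m + n) (i + n))
      - (2 / sqnorm (m - n) a) • vecMulVec (eV (m + n) (i + n)) (eV (m + n) i)
      - (2 / sqnorm (m - n) a) • vecMulVec (uV m n a) (uV m n a) := by
  ext p q
  simp only [Matrix.of_apply, Matrix.sub_apply, Matrix.smul_apply, Matrix.one_apply,
    vecMulVec_apply, eV, uV, smul_eq_mul, Fin.ext_iff,
    show (2 * n + 1 ≤ p.val + 1) ↔ (2 * n ≤ p.val) from by omega,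
    show (2 * n + 1 ≤ q.val + 1) ↔ (2 * n ≤ q.val) from by omega,
    show (p.val + 1 ≤ 2 * n) ↔ ¬(2 * n ≤ p.val) from by omega,
    show (q.val + 1 ≤ 2 * n) ↔ ¬(2 * n ≤ q.val) from by omega]
  have e1 : i ≠ i + n := by omega
  have e2 : i + n ≠ i := by omega
  by_cases hpi : p.val + 1 = i <;> by_cases hpj : p.val + 1 = i + n <;>
    by_cases hpu : 2 * n ≤ p.val <;> by_cases hqi : q.val + 1 = i <;>
    by_cases hqj : q.val + 1 = i + n <;> by_cases hqu : 2 * n ≤ q.val <;>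
    by_cases hpq : (p : ℕ) = (q : ℕ) <;>
    simp only [hpi, hpj, hpu, hqi, hqj, hqu, hpq, e1, e2, if_true, if_false, true_and,
      and_true, false_and, and_false, not_true, not_false_iff, ne_eq, if_neg, if_pos,
      ite_true, ite_false] <;>
    first
      | ring1
      | (exfalso; omega)

/-- **Explicit chain-element formula for the multi-dimensional root `L_i` of
`SO⁺(m,n)`** (Lemma 6.2 of the paper and the subsequent Remark). -/
theorem wL_eq (m n : ℕ) (hmn : n < m) (hn : 1 ≤ n)
    (i : ℕ) (hi1 : 1 ≤ i) (hin : i ≤ n)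
    (a : Fin (m - n) → ℝ) (ha : a ≠ 0) :
    wL m n i a =
      Matrix.of (fun p q =>
        if p.val + 1 = i ∧ q.val + 1 = i + n then -(sqnorm (m - n) a) / 2
        else if p.val + 1 = i + n ∧ q.val + 1 = i then -2 / sqnorm (m - n) a
        else if 2 * n + 1 ≤ p.val + 1 ∧ 2 * n + 1 ≤ q.val + 1 then
          (if p = q then 1 else 0) -
            2 * ext (m - n) a (p.val - 2 * n) * ext (m - n) a (q.val - 2 * n) /
              sqnorm (m - n) a
        else if p = q ∧ p.val + 1 ≤ 2 * n ∧ p.val + 1 ≠ i ∧ p.val + 1 ≠ i + n then 1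
        else 0) := by
  have hs : sqnorm (m - n) a ≠ 0 := by
    intro h
    apply ha
    funext ℓ
    have h0 : ∀ ℓ ∈ Finset.univ, (0:ℝ) ≤ a ℓ ^ 2 := fun _ _ => sq_nonneg _
    have h1 := (Finset.sum_eq_zero_iff_of_nonneg h0).mp h ℓ (Finset.mem_univ _)
    have : a ℓ = 0 := by
      have := pow_eq_zero_iff (n := 2) (by norm_num) |>.mp h1
      exact this
    simpa using this
  have hx : xL m n i a
      = 1 + vecMulVec (eV (m + n) i) (uV m n a) - vecMulVec (uV m n a) (eV (m + n) (i + n))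
        - (sqnorm (m - n) a / 2) • vecMulVec (eV (m + n) i) (eV (m + n) (i + n)) := by
    unfold xL fL
    exact xGen m n i (i + n) (by omega) (by omega) (by omega) (by omega) (by omega) a
  have hy : xnegL m n i ((2 / sqnorm (m - n) a) • a)
      = 1 + (2 / sqnorm (m - n) a) • vecMulVec (eV (m + n) (i + n)) (uV m n a)
        - (2 / sqnorm (m - n) a) • vecMulVec (uV m n a) (eV (m + n) i)
        - (2 / sqnorm (m - n) a) • vecMulVec (eV (m + n) (i + n)) (eV (m + n) i) := by
    unfold xnegL fnegL
    rw [xGen m n (i + n) i (by omega) (by omega) (by omega) (by omega) (by omega)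
      ((2 / sqnorm (m - n) a) • a)]
    rw [uV_smul, sqnorm_smul, vmv_smul_left, vmv_smul_right]
    have hc : (2 / sqnorm (m - n) a) ^ 2 * sqnorm (m - n) a / 2 = 2 / sqnorm (m - n) a := by
      field_simp
    rw [hc]
  have he : eV (m + n) i ⬝ᵥ eV (m + n) i = 1 := by
    rw [dot_e_e _ _ _ (by omega) (by omega)]; simp
  have hf : eV (m + n) (i + n) ⬝ᵥ eV (m + n) (i + n) = 1 := by
    rw [dot_e_e _ _ _ (by omega) (by omega)]; simp
  have hef : eV (m + n) i ⬝ᵥ eV (m + n) (i + n) = 0 := by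
    rw [dot_e_e _ _ _ (by omega) (by omega)]
    rw [if_neg (by omega)]
  have hfe : eV (m + n) (i + n) ⬝ᵥ eV (m + n) i = 0 := by
    rw [dot_e_e _ _ _ (by omega) (by omega)]
    rw [if_neg (by omega)]
  have heu : eV (m + n) i ⬝ᵥ uV m n a = 0 := dot_e_u m n i (by omega) a
  have hfu : eV (m + n) (i + n) ⬝ᵥ uV m n a = 0 := dot_e_u m n (i + n) (by omega) a
  have hue : uV m n a ⬝ᵥ eV (m + n) i = 0 := dot_u_e m n i (by omega) a
  have huf : uV m n a ⬝ᵥ eV (m + n) (i + n) = 0 := dot_u_e m n (i + n) (by omega) a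
  have huu : uV m n a ⬝ᵥ uV m n a = sqnorm (m - n) a := dot_u_u m n (by omega) a
  unfold wL
  rw [hx, hy, W_eq m n i hmn hn hi1 hin a]
  simp only [add_mul, sub_mul, mul_add, mul_sub, one_mul, mul_one, smul_mul_assoc,
    mul_smul_comm, vmv_mul, smul_smul, he, hf, hef, hfe, heu, hfu, hue, huf, huu,
    one_smul, zero_smul, smul_zero, sub_zero, add_zero, zero_sub, zero_add]
  match_scalars <;> field_simp <;> ring
end
end

section
/- Fix integers m > n ≥ 1, 1 ≤ i ≤ n, and let a ∈ ℝ^{m−n} be nonzero. Set X = Σ_{ℓ=1}^{m−n} a_ℓ·(E_{i,2n+ℓ} − E_{2n+ℓ,i+n}) and Y = −(2/|a|²)·Σ_{ℓ=1}^{m−n} a_ℓ·(E_{i+n,2n+ℓ} − E_{2n+ℓ,i}), and let H = X·Y − Y·X. Then H·X − X·H = 2·X and H·Y − Y·H = −2·Y; in particular X, Y, H span a Lie subalgebra of the (m+n)×(m+n) real matrices isomorphic to sl(2,ℝ). -/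
noncomputable section

open Matrix

lemma Estd_mul_same (N k l l' : ℕ) (h1 : 1 ≤ l) (h2 : l ≤ N) :
    Estd N k l * Estd N l l' = Estd N k l' := by
  ext p q
  simp only [Estd, Matrix.mul_apply, Matrix.of_apply]
  rw [Finset.sum_eq_single (⟨l - 1, by omega⟩ : Fin N)]
  · have hl : (l - 1) + 1 = l := by omega
    simp only [hl]
    split_ifs <;> simp_all
  · intro r _ hr
    have : r.1 + 1 ≠ l := by
      intro hc; apply hr; apply Fin.ext; simp; omega
    simp [this]
  · simp

lemma Estd_mul_ne (N k l k' l' : ℕ) (h : l ≠ k') :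
    Estd N k l * Estd N k' l' = 0 := by
  ext p q
  simp only [Estd, Matrix.mul_apply, Matrix.of_apply, Matrix.zero_apply]
  apply Finset.sum_eq_zero
  intro r _
  split_ifs with h1 h2 <;> simp_all

lemma sumE_mul_sumE_zero {d₁ d₂ N : ℕ} (f : Fin d₁ → ℝ) (g : Fin d₂ → ℝ)
    (k l : Fin d₁ → ℕ) (k' l' : Fin d₂ → ℕ) (h : ∀ ℓ ℓ', l ℓ ≠ k' ℓ') :
    (∑ ℓ, f ℓ • Estd N (k ℓ) (l ℓ)) * (∑ ℓ, g ℓ • Estd N (k' ℓ) (l' ℓ)) = 0 := by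
  rw [Finset.sum_mul_sum]
  apply Finset.sum_eq_zero; intro ℓ _
  apply Finset.sum_eq_zero; intro ℓ' _
  rw [smul_mul_assoc, mul_smul_comm, Estd_mul_ne _ _ _ _ _ (h ℓ ℓ'), smul_zero, smul_zero]

lemma sumE_mul_sumE_collapse {d N : ℕ} (f g : Fin d → ℝ) (k k' : ℕ) (c : Fin d → ℕ)
    (hinj : Function.Injective c) (h1 : ∀ ℓ, 1 ≤ c ℓ) (h2 : ∀ ℓ, c ℓ ≤ N) :
    (∑ ℓ, f ℓ • Estd N k (c ℓ)) * (∑ ℓ, g ℓ • Estd N (c ℓ) k') =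
      (∑ ℓ, f ℓ * g ℓ) • Estd N k k' := by
  rw [Finset.sum_mul_sum, Finset.sum_smul]
  apply Finset.sum_congr rfl; intro ℓ _
  rw [Finset.sum_eq_single ℓ]
  · rw [smul_mul_assoc, mul_smul_comm, Estd_mul_same N k (c ℓ) k' (h1 ℓ) (h2 ℓ), smul_smul]
  · intro ℓ' _ hne
    rw [smul_mul_assoc, mul_smul_comm, Estd_mul_ne _ _ _ _ _ (fun hc => hne (hinj hc).symm),
      smul_zero, smul_zero]
  · simp

lemma sumE_mul_sumE_middle {d₁ d₂ N : ℕ} (f : Fin d₁ → ℝ) (g : Fin d₂ → ℝ)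
    (k : Fin d₁ → ℕ) (l : Fin d₂ → ℕ) (j : ℕ) (h1 : 1 ≤ j) (h2 : j ≤ N) :
    (∑ ℓ, f ℓ • Estd N (k ℓ) j) * (∑ ℓ, g ℓ • Estd N j (l ℓ)) =
      ∑ ℓ, ∑ ℓ', (f ℓ * g ℓ') • Estd N (k ℓ) (l ℓ') := by
  rw [Finset.sum_mul_sum]
  apply Finset.sum_congr rfl; intro ℓ _
  apply Finset.sum_congr rfl; intro ℓ' _
  rw [smul_mul_assoc, mul_smul_comm, Estd_mul_same _ _ j _ h1 h2, smul_smul]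

lemma E_mul_sumE {d N : ℕ} (f : Fin d → ℝ) (k j : ℕ) (l : Fin d → ℕ)
    (h1 : 1 ≤ j) (h2 : j ≤ N) :
    Estd N k j * (∑ ℓ, f ℓ • Estd N j (l ℓ)) = ∑ ℓ, f ℓ • Estd N k (l ℓ) := by
  rw [Finset.mul_sum]
  apply Finset.sum_congr rfl; intro ℓ _
  rw [mul_smul_comm, Estd_mul_same _ _ j _ h1 h2]

lemma E_mul_sumE_zero {d N : ℕ} (f : Fin d → ℝ) (k j : ℕ) (k' l' : Fin d → ℕ)
    (h : ∀ ℓ, j ≠ k' ℓ) :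
    Estd N k j * (∑ ℓ, f ℓ • Estd N (k' ℓ) (l' ℓ)) = 0 := by
  rw [Finset.mul_sum]
  apply Finset.sum_eq_zero; intro ℓ _
  rw [mul_smul_comm, Estd_mul_ne _ _ _ _ _ (h ℓ), smul_zero]

lemma sumE_mul_E {d N : ℕ} (f : Fin d → ℝ) (k : Fin d → ℕ) (j l : ℕ)
    (h1 : 1 ≤ j) (h2 : j ≤ N) :
    (∑ ℓ, f ℓ • Estd N (k ℓ) j) * Estd N j l = ∑ ℓ, f ℓ • Estd N (k ℓ) l := by
  rw [Finset.sum_mul]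
  apply Finset.sum_congr rfl; intro ℓ _
  rw [smul_mul_assoc, Estd_mul_same _ _ j _ h1 h2]

lemma sumE_mul_E_zero {d N : ℕ} (f : Fin d → ℝ) (k l : Fin d → ℕ) (j l' : ℕ)
    (h : ∀ ℓ, l ℓ ≠ j) :
    (∑ ℓ, f ℓ • Estd N (k ℓ) (l ℓ)) * Estd N j l' = 0 := by
  rw [Finset.sum_mul]
  apply Finset.sum_eq_zero; intro ℓ _
  rw [smul_mul_assoc, Estd_mul_ne _ _ _ _ _ (h ℓ), smul_zero]

/-- **The Jacobson–Morosov `sl₂`-triple for the root vector of the root `L_i` in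
`so(m,n)`** (proof of Lemma 6.2 of the paper): setting
`X = Σ_ℓ a_ℓ (E_{i,2n+ℓ} − E_{2n+ℓ,i+n})`,
`Y = −(2/|a|²) Σ_ℓ a_ℓ (E_{i+n,2n+ℓ} − E_{2n+ℓ,i})` and `H = [X,Y]`,
one has `[H,X] = 2X` and `[H,Y] = −2Y`, so that `X, Y, H` span a copy of
`sl(2,ℝ)`. -/
theorem sl2_triple_so (m n : ℕ) (hmn : n < m) (hn : 1 ≤ n)
    (i : ℕ) (hi1 : 1 ≤ i) (hin : i ≤ n)
    (a : Fin (m - n) → ℝ) (ha : a ≠ 0)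
    (X Y H : Matrix (Fin (m + n)) (Fin (m + n)) ℝ)
    (hX : X = ∑ ℓ : Fin (m - n),
      a ℓ • (Estd (m + n) i (2 * n + (ℓ.val + 1)) -
        Estd (m + n) (2 * n + (ℓ.val + 1)) (i + n)))
    (hY : Y = (-(2 / sqnorm (m - n) a)) • ∑ ℓ : Fin (m - n),
      a ℓ • (Estd (m + n) (i + n) (2 * n + (ℓ.val + 1)) -
        Estd (m + n) (2 * n + (ℓ.val + 1)) i))
    (hH : H = X * Y - Y * X) :
    H * X - X * H = (2 : ℝ) • X ∧ H * Y - Y * H = (-2 : ℝ) • Y := by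
  -- abbreviations
  have hs : sqnorm (m - n) a ≠ 0 := by
    obtain ⟨j, hj⟩ := Function.ne_iff.mp ha
    have hpos : 0 < sqnorm (m - n) a := by
      rw [sqnorm]
      apply Finset.sum_pos' (fun ℓ _ => sq_nonneg _)
      refine ⟨j, Finset.mem_univ j, ?_⟩
      exact lt_of_le_of_ne (sq_nonneg _) (Ne.symm (pow_ne_zero 2 hj))
    exact ne_of_gt hpos
  set s := sqnorm (m - n) a with hsdef
  -- the "column" indices
  have hc1 : ∀ ℓ : Fin (m - n), 1 ≤ 2 * n + (ℓ.val + 1) := fun ℓ => by omega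
  have hc2 : ∀ ℓ : Fin (m - n), 2 * n + (ℓ.val + 1) ≤ m + n := fun ℓ => by
    have := ℓ.2; omega
  have hcinj : Function.Injective (fun ℓ : Fin (m - n) => 2 * n + (ℓ.val + 1)) := by
    intro ℓ ℓ' h; apply Fin.ext; simpa using h
  have hci : ∀ ℓ : Fin (m - n), 2 * n + (ℓ.val + 1) ≠ i := fun ℓ => by omega
  have hcin : ∀ ℓ : Fin (m - n), 2 * n + (ℓ.val + 1) ≠ i + n := fun ℓ => by omega
  have hiN : i ≤ m + n := by omega
  have hinN : i + n ≤ m + n := by omega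
  have hin1 : 1 ≤ i + n := by omega
  have hini : i + n ≠ i := by omega
  -- the four basic sums
  set P := ∑ ℓ : Fin (m - n), a ℓ • Estd (m + n) i (2 * n + (ℓ.val + 1)) with hP
  set Q := ∑ ℓ : Fin (m - n), a ℓ • Estd (m + n) (2 * n + (ℓ.val + 1)) (i + n) with hQ
  set R := ∑ ℓ : Fin (m - n), a ℓ • Estd (m + n) (i + n) (2 * n + (ℓ.val + 1)) with hR
  set S := ∑ ℓ : Fin (m - n), a ℓ • Estd (m + n) (2 * n + (ℓ.val + 1)) i with hS
  set T := ∑ ℓ : Fin (m - n), ∑ ℓ' : Fin (m - n),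
      (a ℓ * a ℓ') • Estd (m + n) (2 * n + (ℓ.val + 1)) (2 * n + (ℓ'.val + 1)) with hT
  have hss : (∑ ℓ : Fin (m - n), a ℓ * a ℓ) = s := by
    rw [hsdef, sqnorm]; exact Finset.sum_congr rfl fun ℓ _ => (sq (a ℓ)).symm
  have hX' : X = P - Q := by
    rw [hX, hP, hQ, ← Finset.sum_sub_distrib]
    exact Finset.sum_congr rfl fun ℓ _ => smul_sub _ _ _
  have hY' : Y = (-(2 / s)) • (R - S) := by
    rw [hY, hR, hS, ← Finset.sum_sub_distrib]
    congr 1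
    exact Finset.sum_congr rfl fun ℓ _ => smul_sub _ _ _
  -- products
  have hPR : P * R = 0 := sumE_mul_sumE_zero _ _ _ _ _ _ (fun ℓ ℓ' => hcin ℓ)
  have hPS : P * S = s • Estd (m + n) i i := by
    rw [hP, hS, sumE_mul_sumE_collapse a a i i _ hcinj hc1 hc2, hss]
  have hQR : Q * R = T := sumE_mul_sumE_middle a a _ _ (i + n) hin1 hinN
  have hQS : Q * S = 0 := sumE_mul_sumE_zero _ _ _ _ _ _ (fun ℓ ℓ' => (hcin ℓ').symm)
  have hRP : R * P = 0 := sumE_mul_sumE_zero _ _ _ _ _ _ (fun ℓ ℓ' => hci ℓ)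
  have hRQ : R * Q = s • Estd (m + n) (i + n) (i + n) := by
    rw [hR, hQ, sumE_mul_sumE_collapse a a (i + n) (i + n) _ hcinj hc1 hc2, hss]
  have hSP : S * P = T := sumE_mul_sumE_middle a a _ _ i hi1 hiN
  have hSQ : S * Q = 0 := sumE_mul_sumE_zero _ _ _ _ _ _ (fun ℓ ℓ' => (hci ℓ').symm)
  -- compute H
  have h1 : (P - Q) * (R - S) = -(s • Estd (m + n) i i) - T := by
    rw [sub_mul, mul_sub, mul_sub, hPR, hPS, hQR, hQS]; abel
  have h2 : (R - S) * (P - Q) = -(s • Estd (m + n) (i + n) (i + n)) - T := by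
    rw [sub_mul, mul_sub, mul_sub, hRP, hRQ, hSP, hSQ]; abel
  have hls : -(2 / s) * s = -2 := by field_simp
  have hH' : H = (-2 : ℝ) • (Estd (m + n) (i + n) (i + n) - Estd (m + n) i i) := by
    rw [hH, hX', hY', mul_smul_comm, smul_mul_assoc, h1, h2, ← smul_sub]
    have e : (-(s • Estd (m + n) i i) - T) - (-(s • Estd (m + n) (i + n) (i + n)) - T)
        = s • (Estd (m + n) (i + n) (i + n) - Estd (m + n) i i) := by
      rw [smul_sub]; abel
    rw [e, smul_smul, hls]
  -- multiplication by the diagonal part of H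
  have hEiiP : Estd (m + n) i i * P = P := E_mul_sumE a i i _ hi1 hiN
  have hEiiQ : Estd (m + n) i i * Q = 0 := E_mul_sumE_zero a i i _ _ (fun ℓ => (hci ℓ).symm)
  have hEnnP : Estd (m + n) (i + n) (i + n) * P = 0 :=
    E_mul_sumE_zero a (i + n) (i + n) _ _ (fun ℓ => hini)
  have hEnnQ : Estd (m + n) (i + n) (i + n) * Q = 0 :=
    E_mul_sumE_zero a (i + n) (i + n) _ _ (fun ℓ => (hcin ℓ).symm)
  have hPEii : P * Estd (m + n) i i = 0 := sumE_mul_E_zero a _ _ i i (fun ℓ => hci ℓ)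
  have hPEnn : P * Estd (m + n) (i + n) (i + n) = 0 :=
    sumE_mul_E_zero a _ _ (i + n) (i + n) (fun ℓ => hcin ℓ)
  have hQEii : Q * Estd (m + n) i i = 0 := sumE_mul_E_zero a _ _ i i (fun ℓ => hini)
  have hQEnn : Q * Estd (m + n) (i + n) (i + n) = Q := sumE_mul_E a _ (i + n) (i + n) hin1 hinN
  have hEiiR : Estd (m + n) i i * R = 0 := E_mul_sumE_zero a i i _ _ (fun ℓ => (Ne.symm hini))
  have hEiiS : Estd (m + n) i i * S = 0 := E_mul_sumE_zero a i i _ _ (fun ℓ => (hci ℓ).symm)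
  have hEnnR : Estd (m + n) (i + n) (i + n) * R = R := E_mul_sumE a (i + n) (i + n) _ hin1 hinN
  have hEnnS : Estd (m + n) (i + n) (i + n) * S = 0 :=
    E_mul_sumE_zero a (i + n) (i + n) _ _ (fun ℓ => (hcin ℓ).symm)
  have hREii : R * Estd (m + n) i i = 0 := sumE_mul_E_zero a _ _ i i (fun ℓ => hci ℓ)
  have hREnn : R * Estd (m + n) (i + n) (i + n) = 0 :=
    sumE_mul_E_zero a _ _ (i + n) (i + n) (fun ℓ => hcin ℓ)
  have hSEii : S * Estd (m + n) i i = S := sumE_mul_E a _ i i hi1 hiN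
  have hSEnn : S * Estd (m + n) (i + n) (i + n) = 0 :=
    sumE_mul_E_zero a _ _ (i + n) (i + n) (fun ℓ => (Ne.symm hini))
  constructor
  · -- [H, X] = 2X
    have e1 : (Estd (m + n) (i + n) (i + n) - Estd (m + n) i i) * (P - Q) = -P := by
      rw [sub_mul, mul_sub, mul_sub, hEnnP, hEnnQ, hEiiP, hEiiQ]; abel
    have e2 : (P - Q) * (Estd (m + n) (i + n) (i + n) - Estd (m + n) i i) = -Q := by
      rw [mul_sub, sub_mul, sub_mul, hPEnn, hPEii, hQEnn, hQEii]; abel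
    rw [hH', hX', smul_mul_assoc, mul_smul_comm, e1, e2]
    module
  · -- [H, Y] = -2Y
    have e3 : (Estd (m + n) (i + n) (i + n) - Estd (m + n) i i) * (R - S) = R := by
      rw [sub_mul, mul_sub, mul_sub, hEnnR, hEnnS, hEiiR, hEiiS]; abel
    have e4 : (R - S) * (Estd (m + n) (i + n) (i + n) - Estd (m + n) i i) = S := by
      rw [mul_sub, sub_mul, sub_mul, hREnn, hREii, hSEnn, hSEii]; abel
    rw [hH', hY', smul_mul_assoc, mul_smul_comm, smul_mul_assoc, mul_smul_comm, e3, e4]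
    module
end
end

section
/- Let a, b, c, d ∈ ℂ² be unit vectors such that ⟨a,b⟩ = ⟨c,d⟩, where ⟨u,v⟩ = u₁·conj(v₁) + u₂·conj(v₂). Then there exist g ∈ ℂ with |g| = 1 and a 2×2 complex matrix h with hᴴ·h = I and det h = 1 (i.e. h ∈ SU(2)) such that h·a = g·c and h·b = g·d (matrix–vector multiplication and scalar multiplication of vectors). -/
noncomputable section

open Matrix

/-- **Lemma 7.6 of the paper**: `SU(2)` acts transitively, up to a common unit
scalar, on pairs of unit vectors in `ℂ²` with prescribed Hermitian inner
product: if `⟨a,b⟩ = ⟨c,d⟩` then there are `g ∈ ℂ`, `|g| = 1`, and `h ∈ SU(2)`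
with `h·a = g·c` and `h·b = g·d`. -/
theorem su2_transitive_on_pairs
    (a b c d : Fin 2 → ℂ)
    (ha : ∑ j, Complex.normSq (a j) = 1)
    (hb : ∑ j, Complex.normSq (b j) = 1)
    (hc : ∑ j, Complex.normSq (c j) = 1)
    (hd : ∑ j, Complex.normSq (d j) = 1)
    (hinner : a 0 * star (b 0) + a 1 * star (b 1) =
      c 0 * star (d 0) + c 1 * star (d 1)) :
    ∃ (g : ℂ) (h : Matrix (Fin 2) (Fin 2) ℂ),
      ‖g‖ = 1 ∧ hᴴ * h = 1 ∧ h.det = 1 ∧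
        h.mulVec a = g • c ∧ h.mulVec b = g • d := by
  have unit_of : ∀ v : Fin 2 → ℂ, (∑ j, Complex.normSq (v j) = 1) →
      v 0 * star (v 0) + v 1 * star (v 1) = 1 := by
    intro v hv
    simp only [Fin.sum_univ_two] at hv
    have h0 : v 0 * star (v 0) = (Complex.normSq (v 0) : ℂ) := Complex.mul_conj _
    have h1 : v 1 * star (v 1) = (Complex.normSq (v 1) : ℂ) := Complex.mul_conj _
    rw [h0, h1]
    exact_mod_cast congrArg (fun r : ℝ => (r : ℂ)) hv
  have hA := unit_of a ha
  have hB := unit_of b hb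
  have hC := unit_of c hc
  have hD := unit_of d hd
  set s : ℂ := a 0 * b 1 - a 1 * b 0 with hs_def
  set t : ℂ := c 0 * d 1 - c 1 * d 0 with ht_def
  -- conjugated inner product
  have hq : star (a 0) * b 0 + star (a 1) * b 1
      = star (c 0) * d 0 + star (c 1) * d 1 := by
    have h := congrArg (star : ℂ → ℂ) hinner
    simp only [star_add, star_mul', star_star] at h
    linear_combination h
  -- Lagrange identity ⇒ |s| = |t|
  have hS : s * star s = 1 - (a 0 * star (b 0) + a 1 * star (b 1)) *
      (star (a 0) * b 0 + star (a 1) * b 1) := by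
    simp only [hs_def, star_sub, star_mul']
    linear_combination (b 0 * star (b 0) + b 1 * star (b 1)) * hA + hB
  have hT : t * star t = 1 - (c 0 * star (d 0) + c 1 * star (d 1)) *
      (star (c 0) * d 0 + star (c 1) * d 1) := by
    simp only [ht_def, star_sub, star_mul']
    linear_combination (d 0 * star (d 0) + d 1 * star (d 1)) * hC + hD
  have hst : s * star s = t * star t := by
    rw [hS, hT, hinner, hq]
  -- the unit phase w with w * s = t
  obtain ⟨w, hw1, hw2⟩ : ∃ w : ℂ, w * star w = 1 ∧ w * s = t := by
    by_cases hzero : s = 0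
    · refine ⟨1, by simp, ?_⟩
      have h0 : t * star t = 0 := by rw [← hst, hzero, star_zero, mul_zero]
      have ht0 : t = 0 := by
        rcases mul_eq_zero.mp h0 with h | h
        · exact h
        · rw [← star_star t, h, star_zero]
      rw [hzero, ht0, mul_zero]
    · have hzero' : star s ≠ 0 := star_ne_zero.mpr hzero
      refine ⟨t / s, ?_, by field_simp⟩
      rw [star_div₀, div_mul_div_comm, ← hst,
        div_self (mul_ne_zero hzero hzero')]
  have hw0 : w ≠ 0 := by
    intro h; rw [h, zero_mul] at hw1; exact one_ne_zero hw1.symm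
  have habsw : ‖w‖ = 1 := by
    have h1 : (Complex.normSq w : ℂ) = 1 := by
      rw [← Complex.mul_conj]; exact hw1
    have h2 : Complex.normSq w = 1 := by exact_mod_cast h1
    rw [← Complex.sq_norm] at h2
    nlinarith [norm_nonneg w]
  -- the square root δ of `star w`
  set δ : ℂ := Complex.exp (Complex.log (star w) / 2) with hδ_def
  have hsw0 : (star w : ℂ) ≠ 0 := star_ne_zero.mpr hw0
  have hδ2 : δ * δ = star w := by
    rw [hδ_def, ← Complex.exp_add]
    rw [show Complex.log (star w) / 2 + Complex.log (star w) / 2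
      = Complex.log (star w) by ring]
    exact Complex.exp_log hsw0
  have habsw' : ‖star w‖ = 1 := by
    have h1 : ‖star w‖ = ‖w‖ := Complex.norm_conj w
    rw [h1, habsw]
  have hδabs : ‖δ‖ = 1 := by
    rw [hδ_def, Complex.norm_exp]
    have h1 : (Complex.log (star w) / 2).re
        = Real.log ‖star w‖ / 2 := by
      simp [Complex.div_re, Complex.log_re]
    rw [h1, habsw', Real.log_one, zero_div, Real.exp_zero]
  have hδu : star δ * δ = 1 := by
    have h1 : ((Complex.normSq δ : ℝ) : ℂ) = star δ * δ :=
      Complex.normSq_eq_conj_mul_self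
    rw [← h1, ← Complex.sq_norm, hδabs]
    norm_num
  -- the matrices
  set Ua : Matrix (Fin 2) (Fin 2) ℂ :=
    !![a 0, -star (a 1); a 1, star (a 0)] with hUa_def
  set Uc : Matrix (Fin 2) (Fin 2) ℂ :=
    !![c 0, -star (c 1); c 1, star (c 0)] with hUc_def
  set Dm : Matrix (Fin 2) (Fin 2) ℂ := !![(1 : ℂ), 0; 0, w] with hDm_def
  set U : Matrix (Fin 2) (Fin 2) ℂ := Uc * Dm * Uaᴴ with hU_def
  have hUaU : Uaᴴ * Ua = 1 := by
    ext i j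
    fin_cases i <;> fin_cases j <;>
      simp only [hUa_def, Matrix.mul_apply, Fin.sum_univ_two,
        Matrix.conjTranspose_apply, Matrix.one_apply, Matrix.of_apply,
        Matrix.cons_val', Matrix.cons_val_zero, Matrix.cons_val_one,
        Matrix.head_cons, Matrix.head_fin_const, Matrix.empty_val',
        Matrix.cons_val_fin_one, Fin.mk_zero, Fin.mk_one, star_neg, star_star,
        Fin.zero_eq_one_iff, Fin.one_eq_zero_iff, ne_eq, OfNat.ofNat_ne_one,
        not_false_eq_true, ite_true, ite_false, OfNat.one_ne_ofNat,
        one_ne_zero, zero_ne_one, if_true, if_false] <;>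
      first
        | ring1
        | linear_combination hA
        | linear_combination -hA
  have hUcU : Ucᴴ * Uc = 1 := by
    ext i j
    fin_cases i <;> fin_cases j <;>
      simp only [hUc_def, Matrix.mul_apply, Fin.sum_univ_two,
        Matrix.conjTranspose_apply, Matrix.one_apply, Matrix.of_apply,
        Matrix.cons_val', Matrix.cons_val_zero, Matrix.cons_val_one,
        Matrix.head_cons, Matrix.head_fin_const, Matrix.empty_val',
        Matrix.cons_val_fin_one, Fin.mk_zero, Fin.mk_one, star_neg, star_star,
        Fin.zero_eq_one_iff, Fin.one_eq_zero_iff, ne_eq, OfNat.ofNat_ne_one,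
        not_false_eq_true, ite_true, ite_false, OfNat.one_ne_ofNat,
        one_ne_zero, zero_ne_one, if_true, if_false] <;>
      first
        | ring1
        | linear_combination hC
        | linear_combination -hC
  have hDmU : Dmᴴ * Dm = 1 := by
    ext i j
    fin_cases i <;> fin_cases j <;>
      simp only [hDm_def, Matrix.mul_apply, Fin.sum_univ_two,
        Matrix.conjTranspose_apply, Matrix.one_apply, Matrix.of_apply,
        Matrix.cons_val', Matrix.cons_val_zero, Matrix.cons_val_one,
        Matrix.head_cons, Matrix.head_fin_const, Matrix.empty_val',
        Matrix.cons_val_fin_one, Fin.mk_zero, Fin.mk_one, star_zero, star_one,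
        Fin.zero_eq_one_iff, Fin.one_eq_zero_iff, ne_eq, OfNat.ofNat_ne_one,
        not_false_eq_true, ite_true, ite_false, OfNat.one_ne_ofNat,
        one_ne_zero, zero_ne_one, if_true, if_false] <;>
      first
        | ring1
        | linear_combination hw1
        | linear_combination -hw1
  have hUU : Uᴴ * U = 1 := by
    rw [hU_def]
    simp only [Matrix.conjTranspose_mul, Matrix.conjTranspose_conjTranspose,
      Matrix.mul_assoc]
    rw [← Matrix.mul_assoc Ucᴴ Uc, hUcU, Matrix.one_mul,
      ← Matrix.mul_assoc Dmᴴ Dm, hDmU, Matrix.one_mul]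
    exact mul_eq_one_comm.mp hUaU
  have hdetU : U.det = w := by
    have h1 : Ua.det = 1 := by
      rw [hUa_def, Matrix.det_fin_two_of]; linear_combination hA
    have h2 : Uc.det = 1 := by
      rw [hUc_def, Matrix.det_fin_two_of]; linear_combination hC
    have h3 : Dm.det = w := by
      rw [hDm_def, Matrix.det_fin_two_of]; ring
    rw [hU_def, Matrix.det_mul, Matrix.det_mul, Matrix.det_conjTranspose,
      h1, h2, h3, star_one]
    ring
  -- canonical forms
  have hma : U.mulVec a = c := by
    have h1 : Uaᴴ.mulVec a = ![1, 0] := by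
      funext i
      fin_cases i <;>
        simp only [hUa_def, Matrix.mulVec, dotProduct, Fin.sum_univ_two,
          Matrix.conjTranspose_apply, Matrix.of_apply, Matrix.cons_val',
          Matrix.cons_val_zero, Matrix.cons_val_one, Matrix.head_cons,
          Matrix.head_fin_const, Matrix.empty_val', Matrix.cons_val_fin_one,
          Fin.mk_zero, Fin.mk_one, star_neg, star_star] <;>
        first
          | ring1
          | linear_combination hA
          | linear_combination -hA
    have h2 : Dm.mulVec ![1, 0] = ![1, 0] := by
      funext i
      fin_cases i <;>
        simp only [hDm_def, Matrix.mulVec, dotProduct, Fin.sum_univ_two,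
          Matrix.of_apply, Matrix.cons_val', Matrix.cons_val_zero,
          Matrix.cons_val_one, Matrix.head_cons, Matrix.head_fin_const,
          Matrix.empty_val', Matrix.cons_val_fin_one, Fin.mk_zero,
          Fin.mk_one] <;>
        ring1
    have h3 : Uc.mulVec ![1, 0] = c := by
      funext i
      fin_cases i <;>
        simp only [hUc_def, Matrix.mulVec, dotProduct, Fin.sum_univ_two,
          Matrix.of_apply, Matrix.cons_val', Matrix.cons_val_zero,
          Matrix.cons_val_one, Matrix.head_cons, Matrix.head_fin_const,
          Matrix.empty_val', Matrix.cons_val_fin_one, Fin.mk_zero,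
          Fin.mk_one] <;>
        ring1
    rw [hU_def, ← Matrix.mulVec_mulVec, ← Matrix.mulVec_mulVec, h1, h2, h3]
  have hmb : U.mulVec b = d := by
    set q : ℂ := star (c 0) * d 0 + star (c 1) * d 1 with hq_def
    have h1 : Uaᴴ.mulVec b = ![q, s] := by
      funext i
      fin_cases i <;>
        simp only [hUa_def, hq_def, hs_def, Matrix.mulVec, dotProduct,
          Fin.sum_univ_two, Matrix.conjTranspose_apply, Matrix.of_apply,
          Matrix.cons_val', Matrix.cons_val_zero, Matrix.cons_val_one,
          Matrix.head_cons, Matrix.head_fin_const, Matrix.empty_val',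
          Matrix.cons_val_fin_one, Fin.mk_zero, Fin.mk_one, star_neg,
          star_star] <;>
        first
          | ring1
          | linear_combination hq
          | linear_combination -hq
    have h2 : Dm.mulVec ![q, s] = ![q, t] := by
      funext i
      fin_cases i <;>
        simp only [hDm_def, Matrix.mulVec, dotProduct, Fin.sum_univ_two,
          Matrix.of_apply, Matrix.cons_val', Matrix.cons_val_zero,
          Matrix.cons_val_one, Matrix.head_cons, Matrix.head_fin_const,
          Matrix.empty_val', Matrix.cons_val_fin_one, Fin.mk_zero,
          Fin.mk_one] <;>
        first
          | ring1
          | linear_combination hw2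
          | linear_combination -hw2
    have h3 : Uc.mulVec ![q, t] = d := by
      funext i
      fin_cases i <;>
        simp only [hUc_def, hq_def, ht_def, Matrix.mulVec, dotProduct,
          Fin.sum_univ_two, Matrix.of_apply, Matrix.cons_val',
          Matrix.cons_val_zero, Matrix.cons_val_one, Matrix.head_cons,
          Matrix.head_fin_const, Matrix.empty_val', Matrix.cons_val_fin_one,
          Fin.mk_zero, Fin.mk_one] <;>
        first
          | ring1
          | linear_combination (d 0) * hC
          | linear_combination (d 1) * hC
    rw [hU_def, ← Matrix.mulVec_mulVec, ← Matrix.mulVec_mulVec, h1, h2, h3]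
  refine ⟨δ, δ • U, hδabs, ?_, ?_, ?_, ?_⟩
  · rw [Matrix.conjTranspose_smul, Matrix.smul_mul, Matrix.mul_smul, hUU,
      smul_smul, hδu, one_smul]
  · rw [Matrix.det_smul, hdetU]
    simp only [Fintype.card_fin]
    rw [pow_two, hδ2]
    linear_combination hw1
  · rw [Matrix.smul_mulVec, hma]
  · rw [Matrix.smul_mulVec, hmb]
end
end

section
/- Fix integers m > n ≥ 1, 1 ≤ i ≤ n, and let a ∈ ℂ^{m−n} be nonzero. Set X = Σ_{j=1}^{m−n} (a_j·E_{i,2n+j} − conj(a_j)·E_{2n+j,i+n}) and Y = −(2/|a|²)·Σ_{j=1}^{m−n} (a_j·E_{i+n,2n+j} − conj(a_j)·E_{2n+j,i}), and let H = X·Y − Y·X. Then H·X − X·H = 2·X and H·Y − Y·H = −2·Y; in particular X, Y, H span a real Lie subalgebra of the (m+n)×(m+n) complex matrices isomorphic to sl(2,ℝ). -/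
noncomputable section

open Matrix

/-- The `N × N` complex matrix with `(k,l)` entry (1-based) equal to `1`
and all other entries `0`. -/
def EstdC (N k l : ℕ) : Matrix (Fin N) (Fin N) ℂ :=
  Matrix.of fun p q => if p.val + 1 = k ∧ q.val + 1 = l then 1 else 0

/-- The squared Hermitian norm `|a|²` of `a ∈ ℂ^d`. -/
def hsq (d : ℕ) (a : Fin d → ℂ) : ℝ := ∑ j, Complex.normSq (a j)

lemma EstdC_mul (N k l p q : ℕ) (hl1 : 1 ≤ l) (hlN : l ≤ N) :
    EstdC N k l * EstdC N p q = if l = p then EstdC N k q else 0 := by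
  ext r s
  simp only [EstdC, Matrix.mul_apply, Matrix.of_apply]
  rw [Finset.sum_eq_single (⟨l - 1, by omega⟩ : Fin N)]
  · have hl : l - 1 + 1 = l := by omega
    simp only [hl, eq_self_iff_true, and_true]
    by_cases h1 : l = p <;> by_cases h2 : r.val + 1 = k <;>
      by_cases h3 : s.val + 1 = q <;>
      simp [h1, h2, h3, Matrix.zero_apply]
  · intro b _ hb
    have : b.val + 1 ≠ l := by
      intro h; apply hb; apply Fin.ext; simp; omega
    simp [this]
  · simp

lemma key_comm {n' : Type*} [Fintype n'] [DecidableEq n']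
    (A B C D A' B' C' D' P Q F : Matrix n' n' ℂ) (α β : ℂ)
    (hAC : A * C = 0) (hAD : A * D = P) (hBC : B * C = F) (hBD : B * D = 0)
    (hCA : C' * A' = 0) (hCB : C' * B' = Q) (hDA : D' * A' = F) (hDB : D' * B' = 0) :
    (α • A - star α • B) * (β • C - star β • D) -
      (α • C' - star α • D') * (β • A' - star β • B') = (α * star β) • (Q - P) := by
  simp only [sub_mul, mul_sub, smul_mul_assoc, mul_smul_comm, smul_smul,
    hAC, hAD, hBC, hBD, hCA, hCB, hDA, hDB, smul_zero]
  module

/-- **The `sl₂`-triple attached to the elements `x_{L_i}(0,a)` of `SU(m,n)`**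
(chain lemma of Section 7.2 of the paper): setting
`X = Σ_j (a_j E_{i,2n+j} − conj(a_j) E_{2n+j,i+n})`,
`Y = −(2/|a|²) Σ_j (a_j E_{i+n,2n+j} − conj(a_j) E_{2n+j,i})` and `H = [X,Y]`,
one has `[H,X] = 2X` and `[H,Y] = −2Y`, so that `X, Y, H` span a real copy of
`sl(2,ℝ)` inside the `(m+n)×(m+n)` complex matrices. -/
theorem sl2_triple_su (m n : ℕ) (hmn : n < m) (hn : 1 ≤ n)
    (i : ℕ) (hi1 : 1 ≤ i) (hin : i ≤ n)
    (a : Fin (m - n) → ℂ) (ha : a ≠ 0)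
    (X Y H : Matrix (Fin (m + n)) (Fin (m + n)) ℂ)
    (hX : X = ∑ j : Fin (m - n),
      (a j • EstdC (m + n) i (2 * n + (j.val + 1)) -
        star (a j) • EstdC (m + n) (2 * n + (j.val + 1)) (i + n)))
    (hY : Y = (-(2 / (hsq (m - n) a : ℂ))) • ∑ j : Fin (m - n),
      (a j • EstdC (m + n) (i + n) (2 * n + (j.val + 1)) -
        star (a j) • EstdC (m + n) (2 * n + (j.val + 1)) i))
    (hH : H = X * Y - Y * X) :
    H * X - X * H = (2 : ℂ) • X ∧ H * Y - Y * H = (-2 : ℂ) • Y := by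
  set E := EstdC (m + n) with hEdef
  have hs0 : hsq (m - n) a ≠ 0 := by
    intro h
    apply ha
    funext j
    have := (Finset.sum_eq_zero_iff_of_nonneg
      (fun j _ => Complex.normSq_nonneg (a j))).mp h j (Finset.mem_univ j)
    exact Complex.normSq_eq_zero.mp this
  set s : ℂ := ((hsq (m - n) a : ℝ) : ℂ) with hsdef
  have hsne : s ≠ 0 := by
    simpa [hsdef] using hs0
  set c : ℂ := -(2 / s) with hcdef
  have hcs : c * (-s) = 2 := by
    rw [hcdef, neg_mul_neg, div_mul_cancel₀ _ hsne]
  have jlt : ∀ j : Fin (m - n), (j : ℕ) < m - n := fun j => j.isLt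
  set S : Matrix (Fin (m + n)) (Fin (m + n)) ℂ :=
    ∑ j : Fin (m - n), (a j • E (i + n) (2 * n + (j.val + 1)) -
      star (a j) • E (2 * n + (j.val + 1)) i) with hS
  have hYS : Y = c • S := hY
  have mul0 : ∀ (k l p q : ℕ), 1 ≤ l → l ≤ m + n → l ≠ p → E k l * E p q = 0 :=
    fun k l p q h1 h2 h3 => by rw [hEdef, EstdC_mul _ _ _ _ _ h1 h2, if_neg h3]
  have mul1 : ∀ (k l q : ℕ), 1 ≤ l → l ≤ m + n → E k l * E l q = E k q :=
    fun k l q h1 h2 => by rw [hEdef, EstdC_mul _ _ _ _ _ h1 h2, if_pos rfl]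
  have hAC : ∀ j k : Fin (m - n),
      E i (2 * n + (j.val + 1)) * E (i + n) (2 * n + (k.val + 1)) = 0 :=
    fun j k => mul0 _ _ _ _ (by omega) (by have := jlt j; omega) (by have := jlt j; omega)
  have hAD : ∀ j k : Fin (m - n),
      E i (2 * n + (j.val + 1)) * E (2 * n + (k.val + 1)) i =
        if j = k then E i i else 0 := by
    intro j k
    rcases eq_or_ne j k with h | h
    · subst h
      rw [if_pos rfl]
      exact mul1 _ _ _ (by omega) (by have := jlt j; omega)
    · rw [if_neg h]
      refine mul0 _ _ _ _ (by omega) (by have := jlt j; omega) ?_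
      have : (j : ℕ) ≠ (k : ℕ) := fun hh => h (Fin.ext hh)
      omega
  have hBC : ∀ j k : Fin (m - n),
      E (2 * n + (j.val + 1)) (i + n) * E (i + n) (2 * n + (k.val + 1)) =
        E (2 * n + (j.val + 1)) (2 * n + (k.val + 1)) :=
    fun j k => mul1 _ _ _ (by omega) (by omega)
  have hBD : ∀ j k : Fin (m - n),
      E (2 * n + (j.val + 1)) (i + n) * E (2 * n + (k.val + 1)) i = 0 :=
    fun j k => mul0 _ _ _ _ (by omega) (by omega) (by have := jlt k; omega)
  have hCA : ∀ j k : Fin (m - n),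
      E (i + n) (2 * n + (j.val + 1)) * E i (2 * n + (k.val + 1)) = 0 :=
    fun j k => mul0 _ _ _ _ (by omega) (by have := jlt j; omega) (by have := jlt j; omega)
  have hCB : ∀ j k : Fin (m - n),
      E (i + n) (2 * n + (j.val + 1)) * E (2 * n + (k.val + 1)) (i + n) =
        if j = k then E (i + n) (i + n) else 0 := by
    intro j k
    rcases eq_or_ne j k with h | h
    · subst h
      rw [if_pos rfl]
      exact mul1 _ _ _ (by omega) (by have := jlt j; omega)
    · rw [if_neg h]
      refine mul0 _ _ _ _ (by omega) (by have := jlt j; omega) ?_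
      have : (j : ℕ) ≠ (k : ℕ) := fun hh => h (Fin.ext hh)
      omega
  have hDA : ∀ j k : Fin (m - n),
      E (2 * n + (j.val + 1)) i * E i (2 * n + (k.val + 1)) =
        E (2 * n + (j.val + 1)) (2 * n + (k.val + 1)) :=
    fun j k => mul1 _ _ _ (by omega) (by omega)
  have hDB : ∀ j k : Fin (m - n),
      E (2 * n + (j.val + 1)) i * E (2 * n + (k.val + 1)) (i + n) = 0 :=
    fun j k => mul0 _ _ _ _ (by omega) (by omega) (by have := jlt k; omega)
  have hsum_conj : (∑ j, a j * star (a j)) = s := by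
    rw [hsdef, hsq]
    push_cast
    refine Finset.sum_congr rfl (fun j _ => ?_)
    rw [show star (a j) = (starRingEnd ℂ) (a j) from rfl, Complex.mul_conj]
  set G : Matrix (Fin (m + n)) (Fin (m + n)) ℂ := E i i - E (i + n) (i + n) with hG
  have hXS : X * S - S * X = (-s) • G := by
    rw [hX, hS, Finset.sum_mul_sum, Finset.sum_mul_sum]
    simp only [← Finset.sum_sub_distrib]
    have key : ∀ j k : Fin (m - n),
        ((a j • E i (2 * n + (j.val + 1)) -
            star (a j) • E (2 * n + (j.val + 1)) (i + n)) *
          (a k • E (i + n) (2 * n + (k.val + 1)) -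
            star (a k) • E (2 * n + (k.val + 1)) i) -
         (a j • E (i + n) (2 * n + (j.val + 1)) -
            star (a j) • E (2 * n + (j.val + 1)) i) *
          (a k • E i (2 * n + (k.val + 1)) -
            star (a k) • E (2 * n + (k.val + 1)) (i + n))) =
        if j = k then (a j * star (a j)) • (E (i + n) (i + n) - E i i) else 0 := by
      intro j k
      rw [key_comm _ _ _ _ _ _ _ _ _ _ _ _ _ (hAC j k) (hAD j k) (hBC j k) (hBD j k)
        (hCA j k) (hCB j k) (hDA j k) (hDB j k)]
      rcases eq_or_ne j k with h | h
      · subst h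
        simp
      · simp only [if_neg h, sub_zero, sub_self, smul_zero]
    rw [Finset.sum_congr rfl (fun j _ => Finset.sum_congr rfl (fun k _ => key j k))]
    simp only [Finset.sum_ite_eq, Finset.mem_univ, if_pos]
    rw [← Finset.sum_smul, hsum_conj, hG]
    module
  have hHG : H = (2 : ℂ) • G := by
    rw [hH, hYS, mul_smul_comm, smul_mul_assoc, ← smul_sub, hXS, smul_smul, hcs]
  have hGX : G * X - X * G = X := by
    rw [hX, Finset.mul_sum, Finset.sum_mul, ← Finset.sum_sub_distrib]
    refine Finset.sum_congr rfl fun j _ => ?_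
    have h1 : G * E i (2 * n + (j.val + 1)) = E i (2 * n + (j.val + 1)) := by
      rw [hG, sub_mul, mul1 _ _ _ (by omega) (by omega),
        mul0 _ _ _ _ (by omega) (by omega) (by omega), sub_zero]
    have h2 : G * E (2 * n + (j.val + 1)) (i + n) = 0 := by
      rw [hG, sub_mul,
        mul0 _ _ _ _ (by omega) (by omega) (by have := jlt j; omega),
        mul0 _ _ _ _ (by omega) (by omega) (by have := jlt j; omega), sub_zero]
    have h3 : E i (2 * n + (j.val + 1)) * G = 0 := by
      rw [hG, mul_sub,
        mul0 _ _ _ _ (by omega) (by have := jlt j; omega) (by have := jlt j; omega),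
        mul0 _ _ _ _ (by omega) (by have := jlt j; omega) (by have := jlt j; omega),
        sub_zero]
    have h4 : E (2 * n + (j.val + 1)) (i + n) * G =
        -(E (2 * n + (j.val + 1)) (i + n)) := by
      rw [hG, mul_sub, mul0 _ _ _ _ (by omega) (by omega) (by omega),
        mul1 _ _ _ (by omega) (by omega), zero_sub]
    simp only [mul_sub, sub_mul, smul_mul_assoc, mul_smul_comm, h1, h2, h3, h4,
      smul_zero, smul_neg]
    module
  have hGS : G * S - S * G = -S := by
    rw [hS, Finset.mul_sum, Finset.sum_mul, ← Finset.sum_sub_distrib,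
      ← Finset.sum_neg_distrib]
    refine Finset.sum_congr rfl fun j _ => ?_
    have h1 : G * E (i + n) (2 * n + (j.val + 1)) =
        -(E (i + n) (2 * n + (j.val + 1))) := by
      rw [hG, sub_mul, mul0 _ _ _ _ (by omega) (by omega) (by omega),
        mul1 _ _ _ (by omega) (by omega), zero_sub]
    have h2 : G * E (2 * n + (j.val + 1)) i = 0 := by
      rw [hG, sub_mul,
        mul0 _ _ _ _ (by omega) (by omega) (by have := jlt j; omega),
        mul0 _ _ _ _ (by omega) (by omega) (by have := jlt j; omega), sub_zero]
    have h3 : E (i + n) (2 * n + (j.val + 1)) * G = 0 := by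
      rw [hG, mul_sub,
        mul0 _ _ _ _ (by omega) (by have := jlt j; omega) (by have := jlt j; omega),
        mul0 _ _ _ _ (by omega) (by have := jlt j; omega) (by have := jlt j; omega),
        sub_zero]
    have h4 : E (2 * n + (j.val + 1)) i * G = E (2 * n + (j.val + 1)) i := by
      rw [hG, mul_sub, mul1 _ _ _ (by omega) (by omega),
        mul0 _ _ _ _ (by omega) (by omega) (by omega), sub_zero]
    simp only [mul_sub, sub_mul, smul_mul_assoc, mul_smul_comm, h1, h2, h3, h4,
      smul_zero, smul_neg]
    module
  constructor
  · rw [hHG, smul_mul_assoc, mul_smul_comm, ← smul_sub, hGX]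
  · have h1 : (2 : ℂ) • G * (c • S) - c • S * ((2 : ℂ) • G) =
        ((2 : ℂ) * c) • (G * S - S * G) := by
      simp only [smul_mul_assoc, mul_smul_comm, smul_smul, smul_sub]
      module
    rw [hHG, hYS, h1, hGS]
    module
end
end

section
/- Fix integers m ≥ n ≥ 2. For every nonzero t ∈ ℝ and every nonzero z ∈ ℂ, the following identity of (m+n)×(m+n) complex matrices holds: w_{2L_n}(t) · w_{L_{n−1}−L_n}(z) · w_{2L_n}(t)⁻¹ = w_{L_{n−1}+L_n}(−t·z·i). -/
noncomputable section

open Matrix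

/-- `x_{L_i−L_j}(z) = I + z·E_{i,j} − conj(z)·E_{j+n,i+n}`. -/
def xdiffC (m n i j : ℕ) (z : ℂ) : Matrix (Fin (m + n)) (Fin (m + n)) ℂ :=
  1 + z • EstdC (m + n) i j - star z • EstdC (m + n) (j + n) (i + n)

/-- `x_{L_i+L_j}(z) = I + z·E_{i,j+n} − conj(z)·E_{j,i+n}` (for `i < j`). -/
def xplusC (m n i j : ℕ) (z : ℂ) : Matrix (Fin (m + n)) (Fin (m + n)) ℂ :=
  1 + z • EstdC (m + n) i (j + n) - star z • EstdC (m + n) j (i + n)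

/-- `x_{−L_i−L_j}(z) = I + z·E_{j+n,i} − conj(z)·E_{i+n,j}` (for `i < j`). -/
def xnegplusC (m n i j : ℕ) (z : ℂ) : Matrix (Fin (m + n)) (Fin (m + n)) ℂ :=
  1 + z • EstdC (m + n) (j + n) i - star z • EstdC (m + n) (i + n) j

/-- `w_{L_i−L_j}(z) = x_{L_i−L_j}(z) x_{L_j−L_i}(−z⁻¹) x_{L_i−L_j}(z)`. -/
def wdiffC (m n i j : ℕ) (z : ℂ) : Matrix (Fin (m + n)) (Fin (m + n)) ℂ :=
  xdiffC m n i j z * xdiffC m n j i (-z⁻¹) * xdiffC m n i j z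

/-- `w_{L_i+L_j}(z) = x_{L_i+L_j}(z) x_{−L_i−L_j}(−z⁻¹) x_{L_i+L_j}(z)`. -/
def wplusC (m n i j : ℕ) (z : ℂ) : Matrix (Fin (m + n)) (Fin (m + n)) ℂ :=
  xplusC m n i j z * xnegplusC m n i j (-z⁻¹) * xplusC m n i j z

/-- `a₀ = −|a|²/2 + t·i`, for `(t,a) ∈ ℝ × ℂ^d`. -/
def azero (d : ℕ) (t : ℝ) (a : Fin d → ℂ) : ℂ :=
  ((-(hsq d a) / 2 : ℝ) : ℂ) + (t : ℂ) * Complex.I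

/-- `x_{L_i}(t,a) = I + Σ_j (a_j·E_{i,2n+j} − conj(a_j)·E_{2n+j,i+n}) + a₀·E_{i,i+n}`. -/
def xLC (m n i : ℕ) (t : ℝ) (a : Fin (m - n) → ℂ) :
    Matrix (Fin (m + n)) (Fin (m + n)) ℂ :=
  1 + (∑ j : Fin (m - n),
      (a j • EstdC (m + n) i (2 * n + (j.val + 1)) -
        star (a j) • EstdC (m + n) (2 * n + (j.val + 1)) (i + n))) +
    azero (m - n) t a • EstdC (m + n) i (i + n)

/-- `x_{−L_i}(t,a) = I + Σ_j (a_j·E_{i+n,2n+j} − conj(a_j)·E_{2n+j,i}) + a₀·E_{i+n,i}`. -/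
def xnegLC (m n i : ℕ) (t : ℝ) (a : Fin (m - n) → ℂ) :
    Matrix (Fin (m + n)) (Fin (m + n)) ℂ :=
  1 + (∑ j : Fin (m - n),
      (a j • EstdC (m + n) (i + n) (2 * n + (j.val + 1)) -
        star (a j) • EstdC (m + n) (2 * n + (j.val + 1)) i)) +
    azero (m - n) t a • EstdC (m + n) (i + n) i

/-- `w_{L_i}(t,a) = x_{L_i}(t,a) · x_{−L_i}(t/|a₀|², −a₀⁻¹a) · x_{L_i}(t, (conj a₀/a₀)a)`. -/
def wLC (m n i : ℕ) (t : ℝ) (a : Fin (m - n) → ℂ) :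
    Matrix (Fin (m + n)) (Fin (m + n)) ℂ :=
  xLC m n i t a *
    xnegLC m n i (t / Complex.normSq (azero (m - n) t a))
      ((-(azero (m - n) t a)⁻¹) • a) *
    xLC m n i t ((star (azero (m - n) t a) / azero (m - n) t a) • a)

/-- `x_{2L_n}(t) = I + t·i·E_{n,2n}`. -/
def x2L (m n : ℕ) (t : ℝ) : Matrix (Fin (m + n)) (Fin (m + n)) ℂ :=
  1 + ((t : ℂ) * Complex.I) • EstdC (m + n) n (2 * n)

/-- `x_{−2L_n}(t) = I + t·i·E_{2n,n}`. -/
def xneg2L (m n : ℕ) (t : ℝ) : Matrix (Fin (m + n)) (Fin (m + n)) ℂ :=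
  1 + ((t : ℂ) * Complex.I) • EstdC (m + n) (2 * n) n

/-- `w_{2L_n}(t) = x_{2L_n}(t) x_{−2L_n}(t⁻¹) x_{2L_n}(t)`. -/
def w2L (m n : ℕ) (t : ℝ) : Matrix (Fin (m + n)) (Fin (m + n)) ℂ :=
  x2L m n t * xneg2L m n t⁻¹ * x2L m n t


section AuxEcalc

theorem E_mul_E (N k l k' l' : ℕ) (h1 : 1 ≤ l) (h2 : l ≤ N) :
    EstdC N k l * EstdC N k' l' = if l = k' then EstdC N k l' else 0 := by
  ext p q
  rcases eq_or_ne l k' with rfl | h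
  · rw [if_pos rfl]
    simp only [EstdC, Matrix.mul_apply, Matrix.of_apply]
    rw [Finset.sum_eq_single (⟨l - 1, by omega⟩ : Fin N)]
    · have hl : l - 1 + 1 = l := by omega
      simp [hl]; split_ifs <;> simp_all
    · intro r _ hr
      have : r.val + 1 ≠ l := by
        intro hc; apply hr; apply Fin.ext; simp; omega
      simp [this]
    · intro hc; exact absurd (Finset.mem_univ _) hc
  · rw [if_neg h]
    simp only [EstdC, Matrix.mul_apply, Matrix.of_apply, Matrix.zero_apply]
    apply Finset.sum_eq_zero
    intro r _
    by_cases hr : r.val + 1 = l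
    · have : r.val + 1 ≠ k' := by omega
      simp [this]
    · simp [hr]

theorem wform2 (N a b : ℕ) (h1a : 1 ≤ a) (haN : a ≤ N) (h1b : 1 ≤ b) (hbN : b ≤ N)
    (hab : a ≠ b) (α α' : ℂ) (h : α * α' = -1) :
    (1 + α • EstdC N a b) * (1 + α' • EstdC N b a) * (1 + α • EstdC N a b)
      = 1 - EstdC N a a - EstdC N b b + α • EstdC N a b + α' • EstdC N b a := by
  have hba := hab.symm
  have h' : α' * α = -1 := by rw [mul_comm]; exact h
  simp only [mul_add, add_mul, one_mul, mul_one, smul_mul_assoc, mul_smul_comm, smul_smul,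
    E_mul_E _ _ _ _ _ h1a haN, E_mul_E _ _ _ _ _ h1b hbN, hab, hba, if_true, if_false,
    eq_self_iff_true, h, h', neg_one_smul, smul_zero, add_zero, zero_add, ite_true, ite_false,
    ne_eq, not_false_iff, reduceIte, mul_neg, neg_mul, one_mul, smul_neg, neg_smul, one_smul,
    mul_zero, zero_mul, smul_add, mul_neg_one]
  abel

theorem wform (N a b c d : ℕ) (h1a : 1 ≤ a) (haN : a ≤ N) (h1b : 1 ≤ b) (hbN : b ≤ N)
    (h1c : 1 ≤ c) (hcN : c ≤ N) (h1d : 1 ≤ d) (hdN : d ≤ N)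
    (hab : a ≠ b) (hac : a ≠ c) (had : a ≠ d) (hbc : b ≠ c) (hbd : b ≠ d) (hcd : c ≠ d)
    (α α' β β' : ℂ) (h : α * α' = -1) (hb : β * β' = -1) :
    (1 + α • EstdC N a b + β • EstdC N c d) * (1 + α' • EstdC N b a + β' • EstdC N d c) *
        (1 + α • EstdC N a b + β • EstdC N c d)
      = 1 - EstdC N a a - EstdC N b b - EstdC N c c - EstdC N d d
          + α • EstdC N a b + α' • EstdC N b a + β • EstdC N c d + β' • EstdC N d c := by
  have hba := hab.symm; have hca := hac.symm; have hda := had.symm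
  have hcb := hbc.symm; have hdb := hbd.symm; have hdc := hcd.symm
  have h' : α' * α = -1 := by rw [mul_comm]; exact h
  have hb' : β' * β = -1 := by rw [mul_comm]; exact hb
  simp only [mul_add, add_mul, one_mul, mul_one, smul_mul_assoc, mul_smul_comm, smul_smul,
    E_mul_E _ _ _ _ _ h1a haN, E_mul_E _ _ _ _ _ h1b hbN,
    E_mul_E _ _ _ _ _ h1c hcN, E_mul_E _ _ _ _ _ h1d hdN,
    hab, hba, hac, hca, had, hda, hbc, hcb, hbd, hdb, hcd, hdc,
    if_true, if_false, eq_self_iff_true, h, h', hb, hb', neg_one_smul, smul_zero, add_zero,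
    zero_add, ite_true, ite_false, ne_eq, not_false_iff, reduceIte, mul_neg, neg_mul,
    smul_neg, neg_smul, one_smul, mul_zero, zero_mul, smul_add, mul_neg_one]
  abel

theorem W2invL (N b c : ℕ) (h1b : 1 ≤ b) (hbN : b ≤ N) (h1c : 1 ≤ c) (hcN : c ≤ N)
    (hbc : b ≠ c) (τ : ℂ) (hτ : τ ≠ 0) :
    (1 - EstdC N b b - EstdC N c c + τ • EstdC N b c + (-τ⁻¹) • EstdC N c b) *
      (1 - EstdC N b b - EstdC N c c + (-τ) • EstdC N b c + τ⁻¹ • EstdC N c b) = 1 := by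
  have hcb := hbc.symm
  simp only [mul_add, add_mul, mul_sub, sub_mul, one_mul, mul_one, smul_mul_assoc,
    mul_smul_comm, smul_smul, E_mul_E _ _ _ _ _ h1b hbN, E_mul_E _ _ _ _ _ h1c hcN,
    hbc, hcb, if_true, if_false, eq_self_iff_true, ite_true, ite_false, ne_eq,
    not_false_iff, reduceIte, smul_zero, add_zero, zero_add, sub_zero, zero_sub,
    mul_zero, zero_mul, smul_add, smul_sub, smul_neg, neg_smul, mul_neg, neg_mul]
  match_scalars <;> field_simp <;> ring

theorem keymul (N a b c d : ℕ) (h1a : 1 ≤ a) (haN : a ≤ N) (h1b : 1 ≤ b) (hbN : b ≤ N)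
    (h1c : 1 ≤ c) (hcN : c ≤ N) (h1d : 1 ≤ d) (hdN : d ≤ N)
    (hab : a ≠ b) (hac : a ≠ c) (had : a ≠ d) (hbc : b ≠ c) (hbd : b ≠ d) (hcd : c ≠ d)
    (τ z z' w w' : ℂ) (hτ : τ ≠ 0) :
    (1 - EstdC N b b - EstdC N c c + τ • EstdC N b c + (-τ⁻¹) • EstdC N c b) *
      (1 - EstdC N a a - EstdC N b b - EstdC N c c - EstdC N d d
        + z • EstdC N a b + z' • EstdC N b a + w • EstdC N c d + w' • EstdC N d c)
    = (1 - EstdC N a a - EstdC N b b - EstdC N c c - EstdC N d d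
        + (-(τ * z)) • EstdC N a c + ((-τ⁻¹) * z') • EstdC N c a
        + (τ * w) • EstdC N b d + (-((-τ⁻¹) * w')) • EstdC N d b) *
      (1 - EstdC N b b - EstdC N c c + τ • EstdC N b c + (-τ⁻¹) • EstdC N c b) := by
  have hba := hab.symm; have hca := hac.symm; have hda := had.symm
  have hcb := hbc.symm; have hdb := hbd.symm; have hdc := hcd.symm
  simp only [mul_add, add_mul, mul_sub, sub_mul, one_mul, mul_one, smul_mul_assoc,
    mul_smul_comm, smul_smul, E_mul_E _ _ _ _ _ h1a haN, E_mul_E _ _ _ _ _ h1b hbN,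
    E_mul_E _ _ _ _ _ h1c hcN, E_mul_E _ _ _ _ _ h1d hdN,
    hab, hba, hac, hca, had, hda, hbc, hcb, hbd, hdb, hcd, hdc,
    if_true, if_false, eq_self_iff_true, ite_true, ite_false, ne_eq, not_false_iff,
    reduceIte, smul_zero, add_zero, zero_add, sub_zero, zero_sub, mul_zero, zero_mul,
    smul_add, smul_sub, smul_neg, neg_smul, mul_neg, neg_mul]
  match_scalars <;> (field_simp; try ring)

end AuxEcalc

/-- **Item 6 of Lemma 7.5 of the paper, in `SU(m,n)`**:
`w_{2L_n}(t) · w_{L_{n−1}−L_n}(z) · w_{2L_n}(t)⁻¹ = w_{L_{n−1}+L_n}(−t·z·i)`. -/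
theorem w2L_conj_wdiffC (m n : ℕ) (hmn : n ≤ m) (hn : 2 ≤ n)
    (t : ℝ) (ht : t ≠ 0) (z : ℂ) (hz : z ≠ 0) :
    w2L m n t * wdiffC m n (n - 1) n z * (w2L m n t)⁻¹ =
      wplusC m n (n - 1) n (-((t : ℂ) * z * Complex.I)) := by
  have hτ0 : (t : ℂ) * Complex.I ≠ 0 :=
    mul_ne_zero (Complex.ofReal_ne_zero.2 ht) Complex.I_ne_zero
  have hu0 : -((t : ℂ) * z * Complex.I) ≠ 0 := by
    simpa [neg_ne_zero] using
      mul_ne_zero (mul_ne_zero (Complex.ofReal_ne_zero.2 ht) hz) Complex.I_ne_zero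
  have hsz : (starRingEnd ℂ) z ≠ 0 := by
    rw [starRingEnd_apply]; exact star_ne_zero.2 hz
  have hsu : (starRingEnd ℂ) (-((t : ℂ) * z * Complex.I)) ≠ 0 := by
    rw [starRingEnd_apply]; exact star_ne_zero.2 hu0
  -- closed form of w2L
  have hW2 : w2L m n t
      = 1 - EstdC (m+n) n n - EstdC (m+n) (n+n) (n+n)
        + ((t : ℂ) * Complex.I) • EstdC (m+n) n (n+n)
        + (-((t : ℂ) * Complex.I)⁻¹) • EstdC (m+n) (n+n) n := by
    have hc : ((t⁻¹ : ℝ) : ℂ) * Complex.I = -(((t : ℂ) * Complex.I))⁻¹ := by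
      rw [mul_inv, Complex.inv_I]; push_cast; ring
    simp only [w2L, x2L, xneg2L, hc, two_mul]
    exact wform2 (m+n) n (n+n) (by omega) (by omega) (by omega) (by omega) (by omega)
      _ _ (by rw [mul_neg, mul_inv_cancel₀ hτ0])
  -- closed form of wdiffC
  have hWd : wdiffC m n (n-1) n z
      = 1 - EstdC (m+n) (n-1) (n-1) - EstdC (m+n) n n - EstdC (m+n) (n+n) (n+n)
          - EstdC (m+n) (n-1+n) (n-1+n)
        + z • EstdC (m+n) (n-1) n + (-z⁻¹) • EstdC (m+n) n (n-1)
        + (-(star z)) • EstdC (m+n) (n+n) (n-1+n)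
        + (-(star (-z⁻¹))) • EstdC (m+n) (n-1+n) (n+n) := by
    have e : ∀ (i j : ℕ) (y : ℂ), xdiffC m n i j y
        = 1 + y • EstdC (m+n) i j + (-(star y)) • EstdC (m+n) (j+n) (i+n) := by
      intro i j y; rw [xdiffC, sub_eq_add_neg, ← neg_smul]
    rw [wdiffC, e, e]
    exact wform (m+n) (n-1) n (n+n) (n-1+n) (by omega) (by omega) (by omega) (by omega)
      (by omega) (by omega) (by omega) (by omega)
      (by omega) (by omega) (by omega) (by omega) (by omega) (by omega)
      z (-z⁻¹) (-(star z)) (-(star (-z⁻¹)))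
      (by rw [mul_neg, mul_inv_cancel₀ hz])
      (by simp [star_inv₀]; rw [mul_inv_cancel₀ hsz])
  -- closed form of wplusC
  have hWp : wplusC m n (n-1) n (-((t : ℂ) * z * Complex.I))
      = 1 - EstdC (m+n) (n-1) (n-1) - EstdC (m+n) (n+n) (n+n) - EstdC (m+n) n n
          - EstdC (m+n) (n-1+n) (n-1+n)
        + (-((t : ℂ) * z * Complex.I)) • EstdC (m+n) (n-1) (n+n)
        + (-(-((t : ℂ) * z * Complex.I))⁻¹) • EstdC (m+n) (n+n) (n-1)
        + (-(star (-((t : ℂ) * z * Complex.I)))) • EstdC (m+n) n (n-1+n)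
        + (-(star (-(-((t : ℂ) * z * Complex.I))⁻¹))) • EstdC (m+n) (n-1+n) n := by
    have e1 : ∀ (y : ℂ), xplusC m n (n-1) n y
        = 1 + y • EstdC (m+n) (n-1) (n+n) + (-(star y)) • EstdC (m+n) n (n-1+n) := by
      intro y; rw [xplusC, sub_eq_add_neg, ← neg_smul]
    have e2 : ∀ (y : ℂ), xnegplusC m n (n-1) n y
        = 1 + y • EstdC (m+n) (n+n) (n-1) + (-(star y)) • EstdC (m+n) (n-1+n) n := by
      intro y; rw [xnegplusC, sub_eq_add_neg, ← neg_smul]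
    rw [wplusC, e1, e2]
    exact wform (m+n) (n-1) (n+n) n (n-1+n) (by omega) (by omega) (by omega) (by omega)
      (by omega) (by omega) (by omega) (by omega)
      (by omega) (by omega) (by omega) (by omega) (by omega) (by omega)
      _ _ _ _
      (by rw [mul_neg, mul_inv_cancel₀ hu0])
      (by rw [neg_mul_neg, ← star_mul', mul_neg, mul_inv_cancel₀ hu0]; simp)
  -- the key commutation identity
  have hkey := keymul (m+n) (n-1) n (n+n) (n-1+n) (by omega) (by omega) (by omega) (by omega)
    (by omega) (by omega) (by omega) (by omega)
    (by omega) (by omega) (by omega) (by omega) (by omega) (by omega)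
    ((t : ℂ) * Complex.I) z (-z⁻¹) (-(star z)) (-(star (-z⁻¹))) hτ0
  -- match the scalar coefficients
  have s1 : (-(((t : ℂ) * Complex.I) * z)) = -((t : ℂ) * z * Complex.I) := by ring
  have s2 : ((-((t : ℂ) * Complex.I)⁻¹) * (-z⁻¹)) = -(-((t : ℂ) * z * Complex.I))⁻¹ := by ring
  have s3 : (((t : ℂ) * Complex.I) * (-(star z))) = -(star (-((t : ℂ) * z * Complex.I))) := by
    simp [star_neg, star_mul', Complex.conj_I, Complex.conj_ofReal]
    ring
  have s4 : (-((-((t : ℂ) * Complex.I)⁻¹) * (-(star (-z⁻¹)))))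
      = -(star (-(-((t : ℂ) * z * Complex.I))⁻¹)) := by
    simp [star_neg, star_inv₀, star_mul', Complex.conj_I, Complex.conj_ofReal]
    ring
  have hmatch : (1 - EstdC (m+n) (n-1) (n-1) - EstdC (m+n) n n - EstdC (m+n) (n+n) (n+n)
          - EstdC (m+n) (n-1+n) (n-1+n)
        + (-(((t : ℂ) * Complex.I) * z)) • EstdC (m+n) (n-1) (n+n)
        + ((-((t : ℂ) * Complex.I)⁻¹) * (-z⁻¹)) • EstdC (m+n) (n+n) (n-1)
        + (((t : ℂ) * Complex.I) * (-(star z))) • EstdC (m+n) n (n-1+n)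
        + (-((-((t : ℂ) * Complex.I)⁻¹) * (-(star (-z⁻¹))))) • EstdC (m+n) (n-1+n) n)
      = wplusC m n (n-1) n (-((t : ℂ) * z * Complex.I)) := by
    rw [s1, s2, s3, s4, hWp]
    abel
  have hinv : (w2L m n t)⁻¹
      = 1 - EstdC (m+n) n n - EstdC (m+n) (n+n) (n+n)
        + (-((t : ℂ) * Complex.I)) • EstdC (m+n) n (n+n)
        + ((t : ℂ) * Complex.I)⁻¹ • EstdC (m+n) (n+n) n := by
    rw [hW2]
    exact Matrix.inv_eq_right_inv
      (W2invL (m+n) n (n+n) (by omega) (by omega) (by omega) (by omega) (by omega) _ hτ0)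
  rw [hinv, hW2, hWd, ← hmatch]
  rw [hkey, mul_assoc,
    W2invL (m+n) n (n+n) (by omega) (by omega) (by omega) (by omega) (by omega) _ hτ0,
    mul_one]
end
end

section
/- For every (α,β) ∈ ℂ² with |α|² + |β|² = 1, there exist v ∈ ℝ and u ∈ ℂ with v² + |u|² = 1 such that v·α − u·conj(β) is real and conj(u)·α + v·conj(β) is purely imaginary (i.e. has real part 0). -/
/-- **The normal-form claim in the proof of Lemma 7.17 of the paper**: for every
`(α,β) ∈ ℂ²` with `|α|² + |β|² = 1` there exist `v ∈ ℝ` and `u ∈ ℂ` with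
`v² + |u|² = 1` such that `v·α − u·conj(β)` is real and
`conj(u)·α + v·conj(β)` is purely imaginary. Equivalently, the `SU(2)` matrix
`R = [[v, u], [conj u, −v]]` maps the vector `(α, −conj β)` into `ℝ × ℝi`. -/
theorem su2_normal_form (α β : ℂ)
    (h : Complex.normSq α + Complex.normSq β = 1) :
    ∃ (v : ℝ) (u : ℂ), v ^ 2 + Complex.normSq u = 1 ∧
      ((v : ℂ) * α - u * star β).im = 0 ∧
      (star u * α + (v : ℂ) * star β).re = 0 := by
  set A1 := α.re with hA1
  set A2 := α.im with hA2
  set B1 := β.re with hB1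
  set B2 := β.im with hB2
  by_cases hdeg : A2 = 0 ∧ B1 = 0
  · refine ⟨1, 0, by simp, ?_, ?_⟩
    · simp only [Complex.sub_im, Complex.mul_im, Complex.zero_re,
        Complex.zero_im, Complex.ofReal_re, Complex.ofReal_im]
      simpa using hdeg.1
    · simp only [Complex.add_re, Complex.mul_re, Complex.ofReal_re,
        Complex.ofReal_im, star_zero, Complex.zero_re, Complex.zero_im,
        Complex.conj_re, Complex.conj_im]
      simpa using hdeg.2
  · set v0 : ℝ := A1 * B1 + A2 * B2 with hv0
    set u1 : ℝ := -(A2 ^ 2 + B1 ^ 2) with hu1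
    set u2 : ℝ := A1 * A2 - B1 * B2 with hu2
    have hpos : 0 < v0 ^ 2 + u1 ^ 2 + u2 ^ 2 := by
      have h1 : u1 ≠ 0 := by
        intro hz
        apply hdeg
        constructor <;> nlinarith [sq_nonneg A2, sq_nonneg B1]
      positivity
    set n : ℝ := Real.sqrt (v0 ^ 2 + u1 ^ 2 + u2 ^ 2) with hn
    have hnpos : 0 < n := Real.sqrt_pos.mpr hpos
    have hn2 : n ^ 2 = v0 ^ 2 + u1 ^ 2 + u2 ^ 2 := Real.sq_sqrt hpos.le
    have hne : n ≠ 0 := hnpos.ne'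
    refine ⟨v0 / n, ⟨u1 / n, u2 / n⟩, ?_, ?_, ?_⟩
    · have : (v0 / n) ^ 2 + ((u1 / n) ^ 2 + (u2 / n) ^ 2) = 1 := by
        field_simp
        linarith [hn2]
      simpa [Complex.normSq_mk, sq] using this
    · simp only [Complex.sub_im, Complex.mul_im, Complex.ofReal_re,
        Complex.ofReal_im, Complex.star_def, Complex.conj_re, Complex.conj_im]
      field_simp
      ring
    · simp only [Complex.add_re, Complex.mul_re, Complex.ofReal_re,
        Complex.ofReal_im, Complex.star_def, Complex.conj_re, Complex.conj_im]
      field_simp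
      ring
end
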